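/- Let d ∈ (0, 1/2), let a < b be real numbers, set m = (a + b)/2, and let ν ∈ [a, (3a + b)/4]. Then (1 + 2d) · ∫_m^b |λ − ν|^{−2d} dλ ≤ ∫_a^m |λ − ν|^{−2d} dλ. -/

import Mathlib

open MeasureTheory intervalIntegral

private lemma helper_int_right {r ν p q : ℝ} (hr : -1 < r) (hp : ν ≤ p) (hpq : p ≤ q) :
    ∫ x in p..q, |x - ν| ^ r = ((q - ν) ^ (r + 1) - (p - ν) ^ (r + 1)) / (r + 1) := by
  have h1 : ∫ x in p..q, |x - ν| ^ r = ∫ x in p..q, (x - ν) ^ r := by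
    apply intervalIntegral.integral_congr
    intro x hx
    rw [Set.uIcc_of_le hpq] at hx
    show |x - ν| ^ r = (x - ν) ^ r
    rw [abs_of_nonneg (by linarith [hx.1] : (0:ℝ) ≤ x - ν)]
  rw [h1, intervalIntegral.integral_comp_sub_right (fun u => u ^ r) ν]
  exact integral_rpow (Or.inl hr)

private lemma helper_int_left {r ν p q : ℝ} (hr : -1 < r) (hpq : p ≤ q) (hq : q ≤ ν) :
    ∫ x in p..q, |x - ν| ^ r = ((ν - p) ^ (r + 1) - (ν - q) ^ (r + 1)) / (r + 1) := by
  have h1 : ∫ x in p..q, |x - ν| ^ r = ∫ x in p..q, (ν - x) ^ r := by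
    apply intervalIntegral.integral_congr
    intro x hx
    rw [Set.uIcc_of_le hpq] at hx
    show |x - ν| ^ r = (ν - x) ^ r
    rw [abs_sub_comm, abs_of_nonneg (by linarith [hx.2] : (0:ℝ) ≤ ν - x)]
  rw [h1, intervalIntegral.integral_comp_sub_left (fun u => u ^ r) ν]
  exact integral_rpow (Or.inl hr)

private lemma helper_key1 (c s : ℝ) (hc0 : 0 < c) (hc1 : c ≤ 1) (hs0 : 0 ≤ s) (hs1 : s ≤ 1) :
    (2 - c) * ((s + 2) ^ c - 1) ≤ s ^ c + 1 := by
  have h2pos : (0:ℝ) < (2:ℝ) ^ c := Real.rpow_pos_of_pos two_pos c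
  have h2le : (2:ℝ) ^ c ≤ 1 + c := by
    have := rpow_one_add_le_one_add_mul_self (s := 1) (by norm_num) hc0.le hc1
    norm_num at this
    linarith
  have h2ge : (1:ℝ) ≤ (2:ℝ) ^ c := by
    calc (1:ℝ) = (2:ℝ) ^ (0:ℝ) := by simp
    _ ≤ (2:ℝ) ^ c := Real.rpow_le_rpow_of_exponent_le one_le_two hc0.le
  have hsc : s ≤ s ^ c := by
    rcases eq_or_lt_of_le hs0 with h | h
    · rw [← h, Real.zero_rpow hc0.ne']
    · calc s = s ^ (1:ℝ) := (Real.rpow_one s).symm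
        _ ≤ s ^ c := Real.rpow_le_rpow_of_exponent_ge h hs1 hc1
  have hB : (s + 2) ^ c ≤ (2:ℝ) ^ c * (1 + c * (s / 2)) := by
    have h12 : (1 + s / 2) ^ c ≤ 1 + c * (s / 2) :=
      rpow_one_add_le_one_add_mul_self (by linarith) hc0.le hc1
    have heq : s + 2 = 2 * (1 + s / 2) := by ring
    rw [heq, Real.mul_rpow (by norm_num) (by linarith)]
    exact mul_le_mul_of_nonneg_left h12 h2pos.le
  have step1 : (2 - c) * ((s + 2) ^ c - 1) ≤ (2 - c) * ((2:ℝ) ^ c * (1 + c * (s / 2)) - 1) := by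
    apply mul_le_mul_of_nonneg_left _ (by linarith)
    linarith
  have hA : (2 - c) * c ≤ 1 := by nlinarith [sq_nonneg (1 - c)]
  have hAK : (2 - c) * c + (2 - c) * (1 + c) * c / 2 ≤ 2 := by
    nlinarith [mul_nonneg (by linarith : (0:ℝ) ≤ 1 - c)
      (by nlinarith : (0:ℝ) ≤ 4 - 2 * c - c ^ 2)]
  have step2 : (2 - c) * ((2:ℝ) ^ c * (1 + c * (s / 2)) - 1) ≤ s + 1 := by
    nlinarith [mul_nonneg (by linarith : (0:ℝ) ≤ 2 - c) (by linarith : (0:ℝ) ≤ 1 + c - (2:ℝ) ^ c),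
      mul_nonneg (mul_nonneg (mul_nonneg (by linarith : (0:ℝ) ≤ 2 - c) hc0.le) hs0)
        (by linarith : (0:ℝ) ≤ 1 + c - (2:ℝ) ^ c),
      mul_nonneg hs0 (by linarith : (0:ℝ) ≤ 2 - ((2 - c) * c + (2 - c) * (1 + c) * c / 2)),
      mul_nonneg (by linarith : (0:ℝ) ≤ 1 - s) (by linarith : (0:ℝ) ≤ 1 - (2 - c) * c)]
  linarith

private lemma helper_key {c A M : ℝ} (hc0 : 0 < c) (hc1 : c ≤ 1) (hA : 0 ≤ A) (hM : 0 < M)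
    (hAM : A ≤ M) : (2 - c) * ((A + 2 * M) ^ c - M ^ c) ≤ A ^ c + M ^ c := by
  have hs0 : 0 ≤ A / M := div_nonneg hA hM.le
  have hs1 : A / M ≤ 1 := (div_le_one hM).2 hAM
  have h1 : A + 2 * M = (A / M + 2) * M := by field_simp
  have h2 : A ^ c = (A / M) ^ c * M ^ c := by
    rw [← Real.mul_rpow hs0 hM.le, div_mul_cancel₀ _ hM.ne']
  rw [h1, Real.mul_rpow (by linarith) hM.le, h2]
  have hMc : 0 < M ^ c := Real.rpow_pos_of_pos hM c
  have hk := helper_key1 c (A / M) hc0 hc1 hs0 hs1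
  nlinarith [mul_le_mul_of_nonneg_right hk hMc.le]

/-- when ν lies in the first quarter of `[a, b]`, the band-pass "variance"
of the right child is at most `1/(1+2d)` times that of the left child. -/
theorem stmt_12 (d : ℝ) (hd : d ∈ Set.Ioo (0 : ℝ) (1 / 2)) (a b : ℝ) (hab : a < b)
    (m : ℝ) (hm : m = (a + b) / 2) (ν : ℝ) (hν : ν ∈ Set.Icc a ((3 * a + b) / 4)) :
    (1 + 2 * d) * ∫ x in m..b, |x - ν| ^ (-(2 * d)) ≤
      ∫ x in a..m, |x - ν| ^ (-(2 * d)) := by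
  obtain ⟨hd0, hd2⟩ := hd
  obtain ⟨hνa, hνb⟩ := hν
  have hr : (-1 : ℝ) < -(2 * d) := by linarith
  have hc0 : (0 : ℝ) < -(2 * d) + 1 := by linarith
  have hνm : ν < m := by rw [hm]; linarith
  have hmb : m < b := by rw [hm]; linarith
  -- integrability of the pieces of the left integral
  have I1 : IntervalIntegrable (fun x => |x - ν| ^ (-(2 * d))) volume a ν := by
    have base : IntervalIntegrable (fun x : ℝ => x ^ (-(2 * d))) volume (ν - a) 0 :=
      intervalIntegrable_rpow' hr
    have comp := base.comp_sub_left ν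
    simp only [sub_sub_cancel, sub_zero] at comp
    apply comp.congr
    intro x hx
    beta_reduce
    rw [Set.uIoc_of_le hνa] at hx
    rw [abs_sub_comm, abs_of_nonneg (by linarith [hx.2] : (0:ℝ) ≤ ν - x)]
  have I2 : IntervalIntegrable (fun x => |x - ν| ^ (-(2 * d))) volume ν m := by
    have base : IntervalIntegrable (fun x : ℝ => x ^ (-(2 * d))) volume 0 (m - ν) :=
      intervalIntegrable_rpow' hr
    have comp := base.comp_sub_right ν
    simp only [zero_add, sub_add_cancel] at comp
    apply comp.congr
    intro x hx
    beta_reduce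
    rw [Set.uIoc_of_le hνm.le] at hx
    rw [abs_of_nonneg (by linarith [hx.1] : (0:ℝ) ≤ x - ν)]
  have hsplit := intervalIntegral.integral_add_adjacent_intervals I1 I2
  rw [← hsplit, helper_int_left hr hνa le_rfl, helper_int_right hr le_rfl hνm.le,
    helper_int_right hr hνm.le hmb.le]
  rw [sub_self, Real.zero_rpow hc0.ne', sub_zero, sub_zero]
  have hbν : b - ν = (ν - a) + 2 * (m - ν) := by rw [hm]; ring
  rw [hbν]
  have hkey := helper_key hc0 (by linarith : -(2 * d) + 1 ≤ 1)
    (by linarith : (0:ℝ) ≤ ν - a) (by linarith : (0:ℝ) < m - ν)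
    (by rw [hm] at *; linarith : ν - a ≤ m - ν)
  rw [mul_div_assoc', ← add_div, div_le_div_iff₀ hc0 hc0]
  nlinarith [hkey, hc0]
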